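/- For every stabilizer code there is a choice of checks generating its stabilizer, without any redundancy, that is (∞, f(x) = x)-sound. Precisely: let S be an F2-linear subspace of F2^n × F2^n of dimension n − k on which the symplectic product vanishes identically. Then there exists a basis m_1, …, m_{n−k} of S such that, writing σ : F2^n × F2^n → F2^{n−k} for the linear map σ(e)_i = ⟨m_i, e⟩, for every syndrome s ∈ F2^{n−k} there exists e ∈ F2^n × F2^n with σ(e) = s and wt(e) ≤ |s|. -/

import Mathlib

open Finset

abbrev F2 := ZMod 2

abbrev Pauli (n : ℕ) := (Fin n → F2) × (Fin n → F2)

/-- Hamming weight of a vector over `F2`. -/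
def vwt {ι : Type*} [Fintype ι] (v : ι → F2) : ℕ :=
  (Finset.univ.filter fun i => v i ≠ 0).card

/-- Weight of a Pauli operator: number of qubits on which it acts nontrivially. -/
def pwt {n : ℕ} (e : Pauli n) : ℕ :=
  (Finset.univ.filter fun i => e.1 i ≠ 0 ∨ e.2 i ≠ 0).card

/-- Symplectic product of two Pauli operators. -/
def symp {n : ℕ} (e e' : Pauli n) : F2 :=
  (∑ i, e.1 i * e'.2 i) + (∑ i, e.2 i * e'.1 i)

/-- Syndrome map of a check set. -/
def synd {n r : ℕ} (m : Fin r → Pauli n) (e : Pauli n) : Fin r → F2 :=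
  fun i => symp (m i) e

/-- Stabilizer span of a check set. -/
def stab {n r : ℕ} (m : Fin r → Pauli n) : Submodule F2 (Pauli n) :=
  Submodule.span F2 (Set.range m)

/-- Minimum weight of a Pauli modulo the stabilizer span. -/
noncomputable def wtmin {n r : ℕ} (m : Fin r → Pauli n) (e : Pauli n) : ℕ :=
  sInf {w | ∃ s ∈ stab m, w = pwt (e + s)}

/-- `(t, f)`-soundness of a check set. -/
def IsSound {n r : ℕ} (m : Fin r → Pauli n) (t : ℕ) (f : ℕ → ℝ) : Prop :=
  ∀ e : Pauli n, vwt (synd m e) < t →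
    ∃ e' : Pauli n, synd m e' = synd m e ∧ (pwt e' : ℝ) ≤ f (vwt (synd m e))

def sympL (n : ℕ) : Pauli n →ₗ[F2] Pauli n →ₗ[F2] F2 :=
  LinearMap.mk₂ F2 symp
    (fun a b c => by simp [symp, add_mul, Finset.sum_add_distrib]; ring)
    (fun t a b => by simp [symp, Finset.mul_sum, mul_assoc, mul_add, mul_left_comm])
    (fun a b c => by simp [symp, mul_add, Finset.sum_add_distrib]; ring)
    (fun t a b => by simp [symp, Finset.mul_sum, mul_assoc, mul_add, mul_left_comm])

lemma symp_nondeg {n : ℕ} (a : Pauli n) (h : ∀ e : Pauli n, symp a e = 0) : a = 0 := by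
  ext j
  · have := h (0, Pi.single j 1)
    simpa [symp, Pi.single_apply, mul_ite, Finset.sum_ite_eq'] using this
  · have := h (Pi.single j 1, 0)
    simpa [symp, Pi.single_apply, mul_ite, Finset.sum_ite_eq'] using this

@[simp] lemma sympL_apply {n : ℕ} (a b : Pauli n) : sympL n a b = symp a b := rfl

lemma range_top {n r : ℕ} (m0 : Fin r → Pauli n) (hli : LinearIndependent F2 m0) :
    LinearMap.range (LinearMap.pi (fun i => sympL n (m0 i))) = ⊤ := by
  set L := LinearMap.pi (fun i => sympL n (m0 i)) with hL
  have hann : (LinearMap.range L).dualAnnihilator = (⊤ : Submodule F2 (Fin r → F2)).dualAnnihilator := by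
    rw [Submodule.dualAnnihilator_top]
    rw [eq_bot_iff]
    intro φ hφ
    rw [Submodule.mem_dualAnnihilator] at hφ
    -- c i := φ (Pi.single i 1)
    set c : Fin r → F2 := fun i => φ (Pi.single i 1) with hc
    have hphi : ∀ v : Fin r → F2, φ v = ∑ i, v i * c i := by
      intro v
      conv_lhs => rw [← Finset.univ_sum_single v]
      rw [map_sum]
      refine Finset.sum_congr rfl fun i _ => ?_
      have : (Pi.single i (v i) : Fin r → F2) = v i • (Pi.single i 1 : Fin r → F2) := by
        ext j; by_cases h : j = i <;> simp [Pi.single_apply, h, smul_eq_mul]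
      rw [this, map_smul, smul_eq_mul]
    have key : ∀ e : Pauli n, symp (∑ i, c i • m0 i) e = 0 := by
      intro e
      have h1 : φ (L e) = 0 := hφ (L e) ⟨e, rfl⟩
      rw [hphi] at h1
      have h2 : symp (∑ i, c i • m0 i) e = ∑ i, c i * symp (m0 i) e := by
        rw [← sympL_apply, map_sum, LinearMap.sum_apply]
        refine Finset.sum_congr rfl fun i _ => ?_
        rw [map_smul]; simp [smul_eq_mul]
      rw [h2, ← h1]
      refine Finset.sum_congr rfl fun i _ => ?_
      simp [hL, LinearMap.pi_apply, sympL, mul_comm]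
    have hzero : ∑ i, c i • m0 i = 0 := symp_nondeg _ key
    have : ∀ i, c i = 0 := by
      have := linearIndependent_iff'.mp hli Finset.univ c hzero
      intro i; exact this i (Finset.mem_univ i)
    refine LinearMap.ext fun v => ?_
    rw [hphi]
    simp [this]
  exact Subspace.dualAnnihilator_inj.mp hann

lemma pwt_zero {n : ℕ} : pwt (0 : Pauli n) = 0 := by simp [pwt]

lemma pwt_add_le {n : ℕ} (a b : Pauli n) : pwt (a + b) ≤ pwt a + pwt b := by
  classical
  refine le_trans (Finset.card_le_card ?_) (Finset.card_union_le _ _)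
  intro i hi
  simp only [Finset.mem_filter, Finset.mem_univ, true_and, Finset.mem_union] at hi ⊢
  by_contra h
  push_neg at h
  obtain ⟨⟨h1, h2⟩, h3, h4⟩ := h
  rcases hi with hi | hi
  · exact hi (by simp [Prod.fst_add, Pi.add_apply, h1, h3])
  · exact hi (by simp [Prod.snd_add, Pi.add_apply, h2, h4])

lemma pwt_sum_le {n : ℕ} {ι : Type*} (t : Finset ι) (g : ι → Pauli n) :
    pwt (∑ j ∈ t, g j) ≤ ∑ j ∈ t, pwt (g j) := by
  classical
  induction t using Finset.induction with
  | empty => simp [pwt_zero]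
  | insert _ _ hx ih =>
    rename_i a s
    rw [Finset.sum_insert hx, Finset.sum_insert hx]
    exact le_trans (pwt_add_le _ _) (Nat.add_le_add_left ih _)

lemma pwt_single_fst {n : ℕ} (j : Fin n) (a : F2) : pwt ((Pi.single j a, 0) : Pauli n) ≤ 1 := by
  classical
  have : (Finset.univ.filter fun i => (Pi.single j a : Fin n → F2) i ≠ 0 ∨ (0 : Fin n → F2) i ≠ 0) ⊆ {j} := by
    intro i hi
    simp only [Finset.mem_filter, Finset.mem_univ, true_and, Pi.zero_apply, ne_eq,
      not_true_eq_false, or_false, not_false_eq_true, Finset.mem_singleton] at hi ⊢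
    by_contra h
    exact hi (by simp [Pi.single_apply, h])
  calc pwt ((Pi.single j a, 0) : Pauli n) ≤ ({j} : Finset (Fin n)).card := Finset.card_le_card this
  _ = 1 := Finset.card_singleton j

lemma pwt_single_snd {n : ℕ} (j : Fin n) (a : F2) : pwt ((0, Pi.single j a) : Pauli n) ≤ 1 := by
  classical
  have : (Finset.univ.filter fun i => (0 : Fin n → F2) i ≠ 0 ∨ (Pi.single j a : Fin n → F2) i ≠ 0) ⊆ {j} := by
    intro i hi
    simp only [Finset.mem_filter, Finset.mem_univ, true_and, Pi.zero_apply, ne_eq,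
      not_true_eq_false, false_or, Finset.mem_singleton] at hi ⊢
    by_contra h
    exact hi (by simp [Pi.single_apply, h])
  calc pwt ((0, Pi.single j a) : Pauli n) ≤ ({j} : Finset (Fin n)).card := Finset.card_le_card this
  _ = 1 := Finset.card_singleton j

lemma span_wt1 {n : ℕ} : ⊤ ≤ Submodule.span F2 {e : Pauli n | pwt e ≤ 1} := by
  intro e _
  have he : e = (∑ j, ((Pi.single j (e.1 j), 0) : Pauli n)) + ∑ j, ((0, Pi.single j (e.2 j)) : Pauli n) := by
    ext i
    · simp [Prod.fst_sum, Finset.univ_sum_single]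
    · simp [Prod.snd_sum, Finset.univ_sum_single]
  rw [he]
  refine Submodule.add_mem _ (Submodule.sum_mem _ fun j _ => ?_) (Submodule.sum_mem _ fun j _ => ?_)
  · exact Submodule.subset_span (pwt_single_fst j _)
  · exact Submodule.subset_span (pwt_single_snd j _)

lemma symp_sum_smul_left {n : ℕ} {ι : Type*} (t : Finset ι) (g : ι → F2) (v : ι → Pauli n)
    (e : Pauli n) : symp (∑ i ∈ t, g i • v i) e = ∑ i ∈ t, g i * symp (v i) e := by
  rw [← sympL_apply, map_sum, LinearMap.sum_apply]
  exact Finset.sum_congr rfl fun i _ => by rw [map_smul]; simp [smul_eq_mul]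

lemma symp_sum_right {n : ℕ} {ι : Type*} (e : Pauli n) (t : Finset ι) (g : ι → Pauli n) :
    symp e (∑ j ∈ t, g j) = ∑ j ∈ t, symp e (g j) := by
  calc symp e (∑ j ∈ t, g j) = sympL n e (∑ j ∈ t, g j) := rfl
  _ = ∑ j ∈ t, sympL n e (g j) := map_sum _ _ _
  _ = ∑ j ∈ t, symp e (g j) := rfl

lemma symp_zero_left {n : ℕ} (e : Pauli n) : symp 0 e = 0 := by simp [symp]


/-- Theorem 3: every stabilizer code has a redundancy-free choice of checks
that is `(∞, f(x) = x)`-sound. -/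
theorem good_soundness_for_all_codes
    (n k : ℕ) (hk : k ≤ n)
    (S : Submodule F2 (Pauli n))
    (hdim : Module.finrank F2 S = n - k)
    (hiso : ∀ a ∈ S, ∀ b ∈ S, symp a b = 0) :
    ∃ m : Fin (n - k) → Pauli n,
      LinearIndependent F2 m ∧
      Submodule.span F2 (Set.range m) = S ∧
      ∀ s : Fin (n - k) → F2, ∃ e : Pauli n, synd m e = s ∧ pwt e ≤ vwt s := by
  classical
  set r := n - k with hr
  -- basis of S
  let b : Module.Basis (Fin r) F2 S := Module.finBasisOfFinrankEq F2 S hdim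
  let m0 : Fin r → Pauli n := fun i => (b i : Pauli n)
  have hm0li : LinearIndependent F2 m0 := b.linearIndependent.map' S.subtype S.ker_subtype
  have hm0span : Submodule.span F2 (Set.range m0) = S := by
    have h1 : Set.range m0 = S.subtype '' Set.range b := by
      rw [← Set.range_comp]; rfl
    rw [h1, Submodule.span_image, b.span_eq, Submodule.map_top, Submodule.range_subtype]
  let L := LinearMap.pi (fun i => sympL n (m0 i))
  have hrange := range_top m0 hm0li
  have hTspan : ⊤ ≤ Submodule.span F2 (L '' {e : Pauli n | pwt e ≤ 1}) := by
    rw [Submodule.span_image]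
    calc (⊤ : Submodule F2 (Fin r → F2)) = LinearMap.range L := hrange.symm
    _ = Submodule.map L ⊤ := (Submodule.map_top L).symm
    _ ≤ Submodule.map L (Submodule.span F2 {e | pwt e ≤ 1}) := Submodule.map_mono span_wt1
  let c0 := Module.Basis.ofSpan hTspan
  have : Fintype ((linearIndepOn_empty F2 (id : (Fin r → F2) → (Fin r → F2))).extend
      (Set.empty_subset (L '' {e : Pauli n | pwt e ≤ 1}))) := FiniteDimensional.fintypeBasisIndex c0
  have hcard : Fintype.card ((linearIndepOn_empty F2 (id : (Fin r → F2) → (Fin r → F2))).extend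
      (Set.empty_subset (L '' {e : Pauli n | pwt e ≤ 1}))) = r := by
    have h1 := Module.finrank_eq_card_basis c0
    rw [Module.finrank_fin_fun] at h1
    omega
  let c : Module.Basis (Fin r) F2 (Fin r → F2) := c0.reindex (Fintype.equivFinOfCardEq hcard)
  have hc : ∀ j, (c j) ∈ L '' {e : Pauli n | pwt e ≤ 1} := by
    intro j
    have := Module.Basis.ofSpan_subset hTspan
    apply this
    rw [Module.Basis.reindex_apply]
    exact Set.mem_range_self _
  choose f hf1 hf2 using hc
  -- new checks
  let m : Fin r → Pauli n := fun i => ∑ l, (c.repr (Pi.single l 1)) i • m0 l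
  have hLf : ∀ j l, symp (m0 l) (f j) = (c j) l := by
    intro j l
    rw [← hf2 j]
    rfl
  have hkey : ∀ i j, symp (m i) (f j) = if j = i then 1 else 0 := by
    intro i j
    have h1 : symp (m i) (f j) = ∑ l, (c.repr (Pi.single l 1)) i * symp (m0 l) (f j) :=
      symp_sum_smul_left _ _ _ _
    let ψ : (Fin r → F2) →ₗ[F2] F2 := (Finsupp.lapply i) ∘ₗ (c.repr : (Fin r → F2) →ₗ[F2] (Fin r →₀ F2))
    have hsingle : (c j : Fin r → F2) = ∑ l, ((c j) l) • (Pi.single l 1 : Fin r → F2) := by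
      ext x
      rw [Finset.sum_apply]
      simp [Pi.single_apply, mul_ite, Finset.sum_ite_eq']
    have h3 : ∑ l, ((c j) l) * (c.repr (Pi.single l 1)) i = ψ (c j) := by
      conv_rhs => rw [hsingle]
      rw [map_sum]
      refine Finset.sum_congr rfl fun l _ => ?_
      rw [map_smul, smul_eq_mul]
      rfl
    have h4 : ψ (c j) = if j = i then 1 else 0 := by
      simp [ψ, Module.Basis.repr_self, Finsupp.single_apply]
    rw [h1, ← h4, ← h3]
    exact Finset.sum_congr rfl fun l _ => by rw [hLf j l, mul_comm]
  have hmli : LinearIndependent F2 m := by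
    rw [Fintype.linearIndependent_iff]
    intro g hg j
    have h0 := congrArg (fun a => symp a (f j)) hg
    simp only [symp_zero_left] at h0
    rw [symp_sum_smul_left] at h0
    rw [Finset.sum_congr rfl (fun i _ => by rw [hkey i j])] at h0
    simpa using h0
  have hmmem : ∀ i, m i ∈ S := by
    intro i
    refine Submodule.sum_mem _ fun l _ => Submodule.smul_mem _ _ ?_
    exact (b l).2
  have hspan : Submodule.span F2 (Set.range m) = S := by
    refine Submodule.eq_of_le_of_finrank_eq (Submodule.span_le.mpr ?_) ?_
    · rintro x ⟨i, rfl⟩; exact hmmem i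
    · rw [finrank_span_eq_card hmli, hdim]
      simp [hr]
  refine ⟨m, hmli, hspan, ?_⟩
  intro s
  refine ⟨∑ j ∈ Finset.univ.filter (fun j => s j ≠ 0), f j, ?_, ?_⟩
  · funext i
    show symp (m i) _ = s i
    rw [symp_sum_right]
    rw [Finset.sum_congr rfl (fun j _ => hkey i j)]
    rw [Finset.sum_ite_eq' _ i (fun _ => (1 : F2))]
    by_cases hsi : s i = 0
    · simp [hsi]
    · have hone : ∀ a : F2, a ≠ 0 → a = 1 := by decide
      simp [hsi, (hone (s i) hsi).symm]
  · calc pwt (∑ j ∈ Finset.univ.filter (fun j => s j ≠ 0), f j)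
        ≤ ∑ j ∈ Finset.univ.filter (fun j => s j ≠ 0), pwt (f j) := pwt_sum_le _ _
    _ ≤ ∑ _j ∈ Finset.univ.filter (fun j => s j ≠ 0), 1 :=
        Finset.sum_le_sum fun j _ => hf1 j
    _ = vwt s := by simp [vwt]
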